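/- Roof*{(1,1,0), (0,1,1), (1,0,1)} = Cone*{(1,1,0), (0,1,1), (1,0,1)}; i.e., the conjugate roof over the three peaks v_xy, v_yz, v_xz equals the corresponding conjugate cone. -/
import Mathlib


/-- `Cone* A`: the upward closure of `A ⊆ ℝ³` in the componentwise order. -/
def ConeC (A : Set (Fin 3 → ℝ)) : Set (Fin 3 → ℝ) :=
  {l | ∃ a ∈ A, ∀ i, a i ≤ l i}

/-- `Roof* A`: points `l` such that for some `m ∈ ℕ`, `l + m·eᵢ ∈ Cone* A` for all `i`. -/
def RoofC (A : Set (Fin 3 → ℝ)) : Set (Fin 3 → ℝ) :=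
  {l | ∃ m : ℕ, ∀ i : Fin 3, l + (m : ℝ) • (Pi.single i 1 : Fin 3 → ℝ) ∈ ConeC A}

theorem stmt_9 :
    RoofC {![1, 1, 0], ![0, 1, 1], ![1, 0, 1]} =
      ConeC {![1, 1, 0], ![0, 1, 1], ![1, 0, 1]} := by
  ext l
  constructor
  · rintro ⟨m, h⟩
    have f0 : 0 ≤ l 1 ∧ 0 ≤ l 2 ∧ (1 ≤ l 1 ∨ 1 ≤ l 2) := by
      obtain ⟨a, ha, hle⟩ := h 0
      have e1 := hle 1; have e2 := hle 2
      simp only [Set.mem_insert_iff, Set.mem_singleton_iff] at ha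
      rcases ha with rfl | rfl | rfl <;>
        simp [Pi.single_apply] at e1 e2 <;>
        exact ⟨by linarith, by linarith, by tauto⟩
    have f1 : 0 ≤ l 0 ∧ 0 ≤ l 2 ∧ (1 ≤ l 0 ∨ 1 ≤ l 2) := by
      obtain ⟨a, ha, hle⟩ := h 1
      have e1 := hle 0; have e2 := hle 2
      simp only [Set.mem_insert_iff, Set.mem_singleton_iff] at ha
      rcases ha with rfl | rfl | rfl <;>
        simp [Pi.single_apply] at e1 e2 <;>
        exact ⟨by linarith, by linarith, by tauto⟩
    have f2 : 0 ≤ l 0 ∧ 0 ≤ l 1 ∧ (1 ≤ l 0 ∨ 1 ≤ l 1) := by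
      obtain ⟨a, ha, hle⟩ := h 2
      have e1 := hle 0; have e2 := hle 1
      simp only [Set.mem_insert_iff, Set.mem_singleton_iff] at ha
      rcases ha with rfl | rfl | rfl <;>
        simp [Pi.single_apply] at e1 e2 <;>
        exact ⟨by linarith, by linarith, by tauto⟩
    obtain ⟨y0, z0, hyz⟩ := f0
    obtain ⟨x0, -, hxz⟩ := f1
    obtain ⟨-, -, hxy⟩ := f2
    rcases hxy with hx | hy
    · rcases hyz with hy | hz
      · exact ⟨![1, 1, 0], by simp,
          by intro i; fin_cases i <;> simp <;> linarith⟩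
      · exact ⟨![1, 0, 1], by simp,
          by intro i; fin_cases i <;> simp <;> linarith⟩
    · rcases hxz with hx | hz
      · exact ⟨![1, 1, 0], by simp,
          by intro i; fin_cases i <;> simp <;> linarith⟩
      · exact ⟨![0, 1, 1], by simp,
          by intro i; fin_cases i <;> simp <;> linarith⟩
  · intro hC
    exact ⟨0, fun i => by simpa using hC⟩
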